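/- Let q = p^m be a power of a prime p, a ∈ F_{q²} with a^{q+1} = −1, and L an n×n unitary matrix over F_{q²}. Suppose n ≢ 0 (mod p) and n ≢ −2 (mod p), δ = 1, γ ∈ F_{q²} satisfies γ^{q+1} = −3−n with −3−n ≠ 0 in F_{q²}, θ ∈ F_{q²} is nonzero, β = −θ(1+aγ^q)·n^{−1}, α = aθ, and λ = βa. Then the code generated by the bordered matrix H (with first row (θ, β,…,β, α, λ(L₁+⋯+Lₙ)) and (i+1)-st row (δ, (Jₙ+Iₙ)ᵢ, γ, aLᵢ)) is a Hermitian self-dual code of length 2n+2 and dimension n+1. -/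

import Mathlib

open Matrix BigOperators Finset

/-- The Hermitian inner product `x * y = ∑ i, x i * (y i)^q` over `F_{q²}`. -/
def hermInner (q : ℕ) {F : Type} [CommRing F] {ι : Type} [Fintype ι]
    (x y : ι → F) : F :=
  ∑ i, x i * y i ^ q

/-- The Hermitian dual of a set of vectors. -/
def hermDual (q : ℕ) {F : Type} [CommRing F] {ι : Type} [Fintype ι]
    (C : Set (ι → F)) : Set (ι → F) :=
  {y | ∀ x ∈ C, hermInner q x y = 0}

/-- The code generated by a matrix: the span of its rows. -/
def rowSpan {F : Type} [Field F] {k : ℕ} {ι : Type} (G : Matrix (Fin k) ι F) :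
    Submodule F (ι → F) :=
  Submodule.span F (Set.range fun i => G i)
/-- Theorem 4, case 4) of the paper. With `n ≢ 0` and `n ≢ -2 (mod p)`,
`δ = 1`, `γ^{q+1} = -3 - n ≠ 0`, `θ ≠ 0`, `β = -θ(1 + aγ^q)·n⁻¹`, `α = aθ`,
`λ = βa`, the bordered matrix `H` (with `Jₙ + Iₙ`) generates a Hermitian
self-dual code of length `2n+2` and dimension `n+1`. -/
theorem stmt15 (p m q n : ℕ) (hp : p.Prime) (hm : 0 < m) (hq : q = p ^ m)
    (hnp0 : (n : ZMod p) ≠ 0) (hnp2 : (n : ZMod p) ≠ -2)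
    (F : Type) [Field F] [Fintype F] (hF : Fintype.card F = q ^ 2)
    (a : F) (ha : a ^ (q + 1) = -1)
    (L : Matrix (Fin n) (Fin n) F) (hL : L * (L.map (· ^ q))ᵀ = 1)
    (α β γ δ lam θ : F)
    (hδ : δ = 1)
    (hγ : γ ^ (q + 1) = -3 - (n : F)) (hγ0 : (-3 : F) - (n : F) ≠ 0)
    (hθ : θ ≠ 0)
    (hβ : β = -θ * (1 + a * γ ^ q) * (n : F)⁻¹)
    (hα : α = a * θ)
    (hlam : lam = β * a)
    (H : Matrix (Fin (n + 1)) ((Unit ⊕ Fin n) ⊕ (Unit ⊕ Fin n)) F)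
    (hH1 : H 0 (Sum.inl (Sum.inl ())) = θ)
    (hH2 : ∀ j, H 0 (Sum.inl (Sum.inr j)) = β)
    (hH3 : H 0 (Sum.inr (Sum.inl ())) = α)
    (hH4 : ∀ j, H 0 (Sum.inr (Sum.inr j)) = lam * ∑ k, L k j)
    (hH5 : ∀ i : Fin n, H i.succ (Sum.inl (Sum.inl ())) = δ)
    (hH6 : ∀ i j : Fin n, H i.succ (Sum.inl (Sum.inr j)) = if j = i then 2 else 1)
    (hH7 : ∀ i : Fin n, H i.succ (Sum.inr (Sum.inl ())) = γ)
    (hH8 : ∀ i j : Fin n, H i.succ (Sum.inr (Sum.inr j)) = a * L i j) :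
    (rowSpan H : Set ((Unit ⊕ Fin n) ⊕ (Unit ⊕ Fin n) → F)) = hermDual q (rowSpan H) ∧
    Module.finrank F (rowSpan H) = n + 1 := by
  classical
  have hq0 : q ≠ 0 := by subst hq; exact (pow_pos hp.pos m).ne'
  have hpF : (p : F) = 0 := by
    have h1 : ((Fintype.card F : ℕ) : F) = 0 := FiniteField.cast_card_eq_zero F
    rw [hF, hq] at h1
    push_cast at h1
    exact pow_eq_zero_iff (n := m) (by omega) |>.mp
      (pow_eq_zero_iff (n := 2) (by omega) |>.mp h1)
  haveI : CharP F p := (CharP.charP_iff_prime_eq_zero hp).mpr hpF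
  haveI : Fact p.Prime := ⟨hp⟩
  set fr : F →+* F := iterateFrobenius F p m with hfrdef
  have hfr : ∀ x : F, fr x = x ^ q := fun x => by rw [hfrdef, iterateFrobenius_def, hq]
  have hqq : ∀ x : F, (x ^ q) ^ q = x := fun x => by
    rw [← pow_mul, ← pow_two, ← hF]; exact FiniteField.pow_card x
  have hnat : ∀ k : ℕ, ((k : F)) ^ q = (k : F) := fun k => by rw [← hfr]; exact map_natCast fr k
  have hnF : (n : F) ≠ 0 := by
    intro h
    rw [CharP.cast_eq_zero_iff F p] at h
    exact hnp0 ((ZMod.natCast_eq_zero_iff n p).mpr h)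
  have hn2F : (n : F) ≠ -2 := by
    intro h
    have h3 : ((n + 2 : ℕ) : F) = 0 := by push_cast; rw [h]; ring
    rw [CharP.cast_eq_zero_iff F p] at h3
    have h4 : ((n + 2 : ℕ) : ZMod p) = 0 := (ZMod.natCast_eq_zero_iff _ p).mpr h3
    push_cast at h4
    exact hnp2 (by linear_combination h4)
  have ha0 : a ≠ 0 := by
    intro h
    rw [h, zero_pow (by omega : q + 1 ≠ 0)] at ha
    norm_num at ha
  have haγ : a - γ ≠ 0 := by
    intro h
    have hag : a = γ := by linear_combination h
    rw [← hag, ha] at hγ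
    exact hn2F (by linear_combination hγ)
  have horth : ∀ i j : Fin (n+1), hermInner q (H i) (H j) = 0 := by
    -- scalar identities
    have haq : a ^ q * a = -1 := by rw [← pow_succ, ha]
    have haq' : a * a ^ q = -1 := by rw [mul_comm]; exact haq
    have hγγ : γ * γ ^ q = -3 - (n : F) := by rw [mul_comm, ← pow_succ, hγ]
    have hβn : β * (n : F) = -θ * (1 + a * γ ^ q) := by
      rw [hβ]; field_simp
    have hβqn : β ^ q * (n : F) = -θ ^ q * (1 + a ^ q * γ) := by
      have h := congrArg fr hβn
      simp only [_root_.map_mul, _root_.map_neg, _root_.map_add, _root_.map_one, map_natCast] at h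
      rw [hfr, hfr, hfr, hfr, hqq] at h
      exact h
    have h2F : ((2 : F)) ^ q = 2 := by
      have := hnat 2; push_cast at this; exact this
    -- unitarity
    have hLL : ∀ i j, (∑ k, L i k * L j k ^ q) = if i = j then (1 : F) else 0 := by
      intro i j
      have h := congrFun (congrFun hL i) j
      simpa [Matrix.mul_apply, Matrix.one_apply, Matrix.map_apply] using h
    have hpowsum : ∀ (s : Fin n → F), (∑ k, s k) ^ q = ∑ k, s k ^ q := fun s => by
      rw [← hfr, map_sum]; simp [hfr]
    -- (A) ∑_j (∑_k L k j) * (L i j)^q = 1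
    have hA : ∀ i : Fin n, (∑ j, (∑ k, L k j) * L i j ^ q) = 1 := by
      intro i
      have h1 : (∑ j, (∑ k, L k j) * L i j ^ q) = ∑ k, ∑ j, L k j * L i j ^ q := by
        simp_rw [Finset.sum_mul]; exact Finset.sum_comm
      rw [h1]
      simp_rw [hLL]
      simp
    -- (B) ∑_j L i j * (∑_k L k j)^q = 1
    have hB : ∀ i : Fin n, (∑ j, L i j * (∑ k, L k j) ^ q) = 1 := by
      intro i
      have h1 : (∑ j, L i j * (∑ k, L k j) ^ q) = ∑ k, ∑ j, L i j * L k j ^ q := by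
        simp_rw [hpowsum, Finset.mul_sum]; exact Finset.sum_comm
      rw [h1]
      simp_rw [hLL]
      simp
    -- (C) ∑_j (∑_k L k j) * (∑_k L k j)^q = n
    have hC : (∑ j, (∑ k, L k j) * (∑ k, L k j) ^ q) = (n : F) := by
      have h1 : (∑ j, (∑ k, L k j) * (∑ k, L k j) ^ q)
          = ∑ k, ∑ j, L k j * (∑ k', L k' j) ^ q := by
        simp_rw [Finset.sum_mul]; exact Finset.sum_comm
      rw [h1]
      have h2 : ∀ k : Fin n, (∑ j, L k j * (∑ k', L k' j) ^ q) = 1 := hB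
      simp_rw [h2]
      simp
    -- J + I sums
    have hJJ : ∀ i j : Fin n,
        (∑ k, (if k = i then (2:F) else 1) * (if k = j then (2:F) else 1) ^ q)
        = (n : F) + 1 + 1 + (if i = j then 1 else 0) := by
      intro i j
      have h1 : ∀ k : Fin n, (if k = i then (2:F) else 1) * (if k = j then (2:F) else 1) ^ q
          = 1 + (if k = i then 1 else 0) + (if k = j then 1 else 0)
            + (if k = i then (if k = j then (1:F) else 0) else 0) := by
        intro k
        rcases eq_or_ne k i with rfl | h
        · rcases eq_or_ne k j with rfl | h'
          · norm_num [h2F]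
          · norm_num [h', h2F]
        · rcases eq_or_ne k j with rfl | h'
          · norm_num [h, h2F]
          · norm_num [h, h']
      simp_rw [h1]
      rw [Finset.sum_add_distrib, Finset.sum_add_distrib, Finset.sum_add_distrib]
      rw [Finset.sum_const, Finset.card_univ, Fintype.card_fin,
        Finset.sum_ite_eq' Finset.univ i, Finset.sum_ite_eq' Finset.univ j,
        Finset.sum_ite_eq' Finset.univ i]
      simp
    have hJ1 : ∀ i : Fin n, (∑ j, (if j = i then (2:F) else 1)) = (n : F) + 1 := by
      intro i
      have h1 : ∀ k : Fin n, (if k = i then (2:F) else 1) = 1 + (if k = i then 1 else 0) := by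
        intro k; rcases eq_or_ne k i with h | h <;> simp [h] <;> norm_num
      simp_rw [h1]
      rw [Finset.sum_add_distrib, Finset.sum_const, Finset.card_univ, Fintype.card_fin,
        Finset.sum_ite_eq' Finset.univ i]
      simp
    -- hermInner expansion
    have hexp : ∀ x y : (Unit ⊕ Fin n) ⊕ (Unit ⊕ Fin n) → F,
        hermInner q x y = x (.inl (.inl ())) * y (.inl (.inl ())) ^ q
          + (∑ j, x (.inl (.inr j)) * y (.inl (.inr j)) ^ q)
          + (x (.inr (.inl ())) * y (.inr (.inl ())) ^ q
          + ∑ j, x (.inr (.inr j)) * y (.inr (.inr j)) ^ q) := by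
      intro x y
      rw [hermInner, Fintype.sum_sum_type, Fintype.sum_sum_type, Fintype.sum_sum_type]
      simp [add_assoc]
    -- four cases
    have h00 : hermInner q (H 0) (H 0) = 0 := by
      rw [hexp, hH1, hH3]
      simp_rw [hH2, hH4]
      have e1 : (∑ j : Fin n, β * β ^ q) = (n : F) * (β * β ^ q) := by
        rw [Finset.sum_const, Finset.card_univ, Fintype.card_fin, nsmul_eq_mul]
      have e2 : (∑ j, (lam * ∑ k, L k j) * (lam * ∑ k, L k j) ^ q)
          = lam * lam ^ q * (n : F) := by
        have h1 : ∀ j, (lam * ∑ k, L k j) * (lam * ∑ k, L k j) ^ q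
            = lam * lam ^ q * ((∑ k, L k j) * (∑ k, L k j) ^ q) := by
          intro j; rw [mul_pow]; ring
        simp_rw [h1, ← Finset.mul_sum, hC]
      rw [e1, e2, hα, hlam]
      have h1 : (β * a) ^ q = β ^ q * a ^ q := mul_pow _ _ _
      have h2 : (a * θ) ^ q = a ^ q * θ ^ q := mul_pow _ _ _
      rw [h1, h2]
      linear_combination (θ * θ ^ q + (n : F) * β * β ^ q) * haq'
    have h0s : ∀ i : Fin n, hermInner q (H 0) (H i.succ) = 0 := by
      intro i
      rw [hexp, hH1, hH3, hH5, hH7]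
      simp_rw [hH2, hH4, hH6, hH8]
      have e1 : (∑ j, β * (if j = i then (2:F) else 1) ^ q) = β * ((n : F) + 1) := by
        have h1 : ∀ j : Fin n, β * (if j = i then (2:F) else 1) ^ q
            = β * (if j = i then (2:F) else 1) := by
          intro j; rcases eq_or_ne j i with h | h <;> simp [h, h2F]
        simp_rw [h1, ← Finset.mul_sum, hJ1]
      have e2 : (∑ j, (lam * ∑ k, L k j) * (a * L i j) ^ q) = lam * a ^ q := by
        have h1 : ∀ j, (lam * ∑ k, L k j) * (a * L i j) ^ q
            = lam * a ^ q * ((∑ k, L k j) * L i j ^ q) := by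
          intro j; rw [mul_pow]; ring
        simp_rw [h1, ← Finset.mul_sum, hA i, mul_one]
      rw [e1, e2, hδ, hα, hlam]
      rw [one_pow, mul_one]
      linear_combination hβn + β * haq
    have hs0 : ∀ i : Fin n, hermInner q (H i.succ) (H 0) = 0 := by
      intro i
      rw [hexp, hH1, hH3, hH5, hH7]
      simp_rw [hH2, hH4, hH6, hH8]
      have e1 : (∑ j, (if j = i then (2:F) else 1) * β ^ q) = ((n : F) + 1) * β ^ q := by
        rw [← Finset.sum_mul, hJ1]
      have e2 : (∑ j, (a * L i j) * (lam * ∑ k, L k j) ^ q) = a * lam ^ q := by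
        have h1 : ∀ j, (a * L i j) * (lam * ∑ k, L k j) ^ q
            = a * lam ^ q * (L i j * (∑ k, L k j) ^ q) := by
          intro j; rw [mul_pow]; ring
        simp_rw [h1, ← Finset.mul_sum, hB i, mul_one]
      rw [e1, e2, hδ, hα, hlam]
      have h1 : (β * a) ^ q = β ^ q * a ^ q := mul_pow _ _ _
      have h2 : (a * θ) ^ q = a ^ q * θ ^ q := mul_pow _ _ _
      rw [h1, h2, one_mul]
      linear_combination hβqn + β ^ q * haq'
    have hss : ∀ i j : Fin n, hermInner q (H i.succ) (H j.succ) = 0 := by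
      intro i j
      rw [hexp, hH5, hH7]
      simp_rw [hH5, hH6, hH7, hH8]
      have e2 : (∑ k, (a * L i k) * (a * L j k) ^ q)
          = a * a ^ q * (if i = j then (1:F) else 0) := by
        have h1 : ∀ k, (a * L i k) * (a * L j k) ^ q
            = a * a ^ q * (L i k * L j k ^ q) := by
          intro k; rw [mul_pow]; ring
        simp_rw [h1, ← Finset.mul_sum, hLL i j]
      rw [hJJ i j, e2, hδ, one_pow, mul_one]
      rcases eq_or_ne i j with h | h
      · simp only [h, if_pos rfl, if_true]
        linear_combination hγγ + haq'
      · simp only [if_neg h]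
        linear_combination hγγ
    intro i j
    induction i using Fin.cases with
    | zero =>
      induction j using Fin.cases with
      | zero => exact h00
      | succ j => exact h0s j
    | succ i =>
      induction j using Fin.cases with
      | zero => exact hs0 i
      | succ j => exact hss i j
  -- linear independence of the rows
  have hind : LinearIndependent F (fun i => H i) := by
    rw [Fintype.linearIndependent_iff]
    intro c hc
    have happ : ∀ pt, (∑ i, c i * H i pt) = 0 := by
      intro pt
      have := congrFun hc pt
      simpa [Finset.sum_apply] using this
    have h1 := happ (Sum.inl (Sum.inl ()))
    have h2 := happ (Sum.inr (Sum.inl ()))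
    rw [Fin.sum_univ_succ] at h1 h2
    simp only [hH1, hH3, hH5, hH7, hδ, hα, mul_one] at h1 h2
    rw [← Finset.sum_mul] at h2
    have h3 : c 0 * (θ * (a - γ)) = 0 := by linear_combination h2 - γ * h1
    have hc0 : c 0 = 0 :=
      (mul_eq_zero.mp h3).resolve_right (mul_ne_zero hθ haγ)
    have hvec : ∀ j, (∑ i : Fin n, c i.succ * L i j) = 0 := by
      intro j
      have h4 := happ (Sum.inr (Sum.inr j))
      rw [Fin.sum_univ_succ] at h4
      simp only [hH4, hH8, hc0, zero_mul, zero_add] at h4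
      have h5 : a * (∑ i : Fin n, c i.succ * L i j) = 0 := by
        rw [Finset.mul_sum, ← h4]
        exact Finset.sum_congr rfl fun i _ => by ring
      exact (mul_eq_zero.mp h5).resolve_left ha0
    have hvm : Matrix.vecMul (fun i => c i.succ) L = 0 := by
      funext j
      simpa [Matrix.vecMul, dotProduct] using hvec j
    have h5 : Matrix.vecMul (Matrix.vecMul (fun i => c i.succ) L) (L.map (· ^ q))ᵀ
        = fun i => c i.succ := by
      rw [Matrix.vecMul_vecMul, hL, Matrix.vecMul_one]
    rw [hvm, Matrix.zero_vecMul] at h5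
    intro i
    induction i using Fin.cases with
    | zero => exact hc0
    | succ i => exact (congrFun h5.symm i)
  have hfinrank : Module.finrank F (rowSpan H) = n + 1 := by
    have := finrank_span_eq_card hind
    simp only [Fintype.card_fin] at this
    exact this
  -- Frobenius twist equivalence
  have hbij : Function.Bijective (fun x : F => x ^ q) := by
    have hinj : Function.Injective (fun x : F => x ^ q) := fun x y h => by
      have h2 := congrArg (· ^ q) h
      simpa [hqq] using h2
    exact ⟨hinj, Finite.surjective_of_injective hinj⟩
  let e : (((Unit ⊕ Fin n) ⊕ (Unit ⊕ Fin n)) → F) ≃ (((Unit ⊕ Fin n) ⊕ (Unit ⊕ Fin n)) → F) :=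
    Equiv.piCongrRight fun _ => Equiv.ofBijective _ hbij
  have he : ∀ (y : ((Unit ⊕ Fin n) ⊕ (Unit ⊕ Fin n)) → F) c, e y c = y c ^ q :=
    fun y c => rfl
  -- characterization of the dual
  have hdual_iff : ∀ y, y ∈ hermDual q ((rowSpan H : Submodule F _) : Set (((Unit ⊕ Fin n) ⊕ (Unit ⊕ Fin n)) → F)) ↔
      ∀ i, hermInner q (H i) y = 0 := by
    intro y
    constructor
    · intro hy i; exact hy (H i) (Submodule.subset_span ⟨i, rfl⟩)
    · intro hy x hx
      have hx' : x ∈ rowSpan H := hx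
      refine Submodule.span_induction ?_ ?_ ?_ ?_ hx'
      · rintro x ⟨i, rfl⟩; exact hy i
      · simp [hermInner]
      · intro u v hu hv hpu hpv
        have : hermInner q (u + v) y = hermInner q u y + hermInner q v y := by
          simp [hermInner, add_mul, Finset.sum_add_distrib]
        rw [this, hpu, hpv, add_zero]
      · intro r u hu hpu
        have : hermInner q (r • u) y = r * hermInner q u y := by
          simp only [hermInner, Pi.smul_apply, smul_eq_mul, Finset.mul_sum, mul_assoc]
        rw [this, hpu, mul_zero]
  -- the span is contained in its dual
  have hsub : ((rowSpan H : Submodule F _) : Set (((Unit ⊕ Fin n) ⊕ (Unit ⊕ Fin n)) → F)) ⊆ hermDual q ((rowSpan H : Submodule F _) : Set (((Unit ⊕ Fin n) ⊕ (Unit ⊕ Fin n)) → F)) := by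
    intro y hy
    have hy' : y ∈ rowSpan H := hy
    refine (hdual_iff y).mpr ?_
    refine Submodule.span_induction ?_ ?_ ?_ ?_ hy'
    · rintro y ⟨j, rfl⟩ i; exact horth i j
    · intro i; simp [hermInner, zero_pow hq0]
    · intro u v hu hv hpu hpv i
      have : hermInner q (H i) (u + v) = hermInner q (H i) u + hermInner q (H i) v := by
        simp only [hermInner, Pi.add_apply]
        rw [← Finset.sum_add_distrib]
        refine Finset.sum_congr rfl fun c _ => ?_
        have hadd : (u c + v c) ^ q = u c ^ q + v c ^ q := by
          rw [← hfr, ← hfr, ← hfr, map_add]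
        rw [hadd]; ring
      rw [this, hpu i, hpv i, add_zero]
    · intro r u hu hpu i
      have : hermInner q (H i) (r • u) = r ^ q * hermInner q (H i) u := by
        simp only [hermInner, Pi.smul_apply, smul_eq_mul, Finset.mul_sum]
        refine Finset.sum_congr rfl fun c _ => ?_
        rw [mul_pow]; ring
      rw [this, hpu i, mul_zero]
  -- dual as preimage of a kernel
  have hdual_eq : hermDual q ((rowSpan H : Submodule F _) : Set (((Unit ⊕ Fin n) ⊕ (Unit ⊕ Fin n)) → F))
      = e ⁻¹' (LinearMap.ker (Matrix.mulVecLin H) : Set _) := by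
    ext y
    rw [Set.mem_preimage, SetLike.mem_coe, LinearMap.mem_ker, hdual_iff y, funext_iff]
    refine forall_congr' fun i => ?_
    simp only [Matrix.mulVecLin_apply, Matrix.mulVec, dotProduct, hermInner,
      Pi.zero_apply]
    constructor
    · intro h; rw [← h]; exact Finset.sum_congr rfl fun c _ => by rw [he]
    · intro h; rw [← h]; exact Finset.sum_congr rfl fun c _ => by rw [he]
  -- dimension of the kernel
  have hck : Module.finrank F (LinearMap.ker (Matrix.mulVecLin H)) = n + 1 := by
    have hrk : Matrix.rank H = n + 1 := by simpa using hind.rank_matrix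
    have h2 := LinearMap.finrank_range_add_finrank_ker (Matrix.mulVecLin H)
    have h3 : Module.finrank F (((Unit ⊕ Fin n) ⊕ (Unit ⊕ Fin n)) → F) = 2 * n + 2 := by
      rw [Module.finrank_fintype_fun_eq_card]
      simp only [Fintype.card_sum, Fintype.card_unit, Fintype.card_fin]
      omega
    rw [h3] at h2
    have h4 : Module.finrank F (LinearMap.range (Matrix.mulVecLin H)) = n + 1 := hrk
    omega
  -- cardinalities
  have hcard1 : ((rowSpan H : Submodule F _) : Set (((Unit ⊕ Fin n) ⊕ (Unit ⊕ Fin n)) → F)).ncard = Fintype.card F ^ (n + 1) := by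
    rw [← Nat.card_coe_set_eq, SetLike.coe_sort_coe, Nat.card_eq_fintype_card,
      Module.card_eq_pow_finrank (K := F), hfinrank]
  have hcard2 : (hermDual q ((rowSpan H : Submodule F _) : Set (((Unit ⊕ Fin n) ⊕ (Unit ⊕ Fin n)) → F))).ncard = Fintype.card F ^ (n + 1) := by
    rw [hdual_eq, ← Equiv.image_symm_eq_preimage, Set.ncard_image_of_injective _
      (Equiv.injective _)]
    rw [← Nat.card_coe_set_eq, SetLike.coe_sort_coe, Nat.card_eq_fintype_card,
      Module.card_eq_pow_finrank (K := F), hck]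
  refine ⟨?_, hfinrank⟩
  exact Set.eq_of_subset_of_ncard_le hsub (by rw [hcard1, hcard2]) (Set.toFinite _)
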